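/- Every variety V with right existentially definable factor congruences (RexDFC) that is stable by complements has twice existentially definable factor congruences (TexDFC): there exist existential first-order L-formulas λ(z⃗,x,y) and ρ(z⃗,x,y) such that for all A, B ∈ V, a, b ∈ A and c, d ∈ B: A×B ⊨ λ([0⃗,1⃗],(a,c),(b,d)) if and only if c = d, and A×B ⊨ ρ([0⃗,1⃗],(a,c),(b,d)) if and only if a = b. -/

import Mathlib

open FirstOrder FirstOrder.Language FirstOrder.Language.Structure

universe u v w

namespace Paper

variable {L : FirstOrder.Language.{0, 0}}

/-- A congruence on an `L`-algebra: an equivalence relation compatible with all operations. -/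
structure AlgCon (L : FirstOrder.Language.{0, 0}) (A : Type u) [L.Structure A] where
  r : A → A → Prop
  refl : ∀ a, r a a
  symm : ∀ {a b}, r a b → r b a
  trans : ∀ {a b c}, r a b → r b c → r a c
  compat : ∀ {m : ℕ} (f : L.Functions m) (x y : Fin m → A),
    (∀ i, r (x i) (y i)) → r (funMap f x) (funMap f y)

namespace AlgCon

variable {A : Type u} [L.Structure A]

theorem ext' {c d : AlgCon L A} (h : ∀ a b, c.r a b ↔ d.r a b) : c = d := by
  cases c; cases d
  simp only [AlgCon.mk.injEq]
  funext a b
  exact propext (h a b)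

/-- The identity (diagonal) congruence Δ. -/
def delta (L : FirstOrder.Language.{0, 0}) (A : Type u) [L.Structure A] : AlgCon L A where
  r := Eq
  refl := fun _ => rfl
  symm := fun h => h.symm
  trans := fun h1 h2 => h1.trans h2
  compat := fun f x y h => by rw [funext h]

/-- The universal congruence ∇. -/
def nabla (L : FirstOrder.Language.{0, 0}) (A : Type u) [L.Structure A] : AlgCon L A where
  r := fun _ _ => True
  refl := fun _ => trivial
  symm := fun _ => trivial
  trans := fun _ _ => trivial
  compat := fun _ _ _ _ => trivial

/-- Meet (intersection) of congruences. -/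
def inf (c d : AlgCon L A) : AlgCon L A where
  r := fun a b => c.r a b ∧ d.r a b
  refl := fun a => ⟨c.refl a, d.refl a⟩
  symm := fun h => ⟨c.symm h.1, d.symm h.2⟩
  trans := fun h1 h2 => ⟨c.trans h1.1 h2.1, d.trans h1.2 h2.2⟩
  compat := fun f x y h =>
    ⟨c.compat f x y fun i => (h i).1, d.compat f x y fun i => (h i).2⟩

/-- Relational composition of congruences (as a binary relation). -/
def comp (c d : AlgCon L A) (a b : A) : Prop := ∃ z, c.r a z ∧ d.r z b

/-- The congruence generated by a binary relation. -/
def conGen (L : FirstOrder.Language.{0, 0}) {A : Type u} [L.Structure A]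
    (R : A → A → Prop) : AlgCon L A where
  r := fun a b => ∀ c : AlgCon L A, (∀ x y, R x y → c.r x y) → c.r a b
  refl := fun a _ _ => AlgCon.refl _ a
  symm := fun h c hc => c.symm (h c hc)
  trans := fun h1 h2 c hc => c.trans (h1 c hc) (h2 c hc)
  compat := fun f x y h c hc => c.compat f x y fun i => h i c hc

/-- Join of congruences in the congruence lattice. -/
def sup (c d : AlgCon L A) : AlgCon L A :=
  conGen L (fun a b => c.r a b ∨ d.r a b)

end AlgCon

/-- The principal congruence θ(a⃗, b⃗) generated by the pairs (aᵢ, bᵢ). -/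
def thetaPairs {A : Type u} [L.Structure A] {n : ℕ} (a b : Fin n → A) : AlgCon L A :=
  AlgCon.conGen L (fun x y => ∃ i, x = a i ∧ y = b i)

/-- The congruence θ(S) generated by S × S. -/
def thetaSet {A : Type u} [L.Structure A] (S : Set A) : AlgCon L A :=
  AlgCon.conGen L (fun x y => x ∈ S ∧ y ∈ S)

/-- `[a⃗, b⃗] ∈ θ`: all pairs (aᵢ, bᵢ) belong to the congruence θ. -/
def inCon {A : Type u} [L.Structure A] {n : ℕ} (θ : AlgCon L A) (a b : Fin n → A) : Prop :=
  ∀ i, θ.r (a i) (b i)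

/-- θ and δ are complementary factor congruences: θ ∩ δ = Δ and θ ∘ δ = ∇. -/
def IsComplFC {A : Type u} [L.Structure A] (θ δ : AlgCon L A) : Prop :=
  θ.inf δ = AlgCon.delta L A ∧ ∀ a b : A, θ.comp δ a b

/-- The set of factor congruences of `A`. -/
def FC (L : FirstOrder.Language.{0, 0}) (A : Type u) [L.Structure A] : Set (AlgCon L A) :=
  {θ | ∃ δ, IsComplFC θ δ}

/-- `S` is a Boolean sublattice of the congruence lattice of `A`: it contains Δ and ∇,
is closed under meet and join, is distributive, and every element has a complement in `S`. -/
def IsBooleanSublattice {A : Type u} [L.Structure A] (S : Set (AlgCon L A)) : Prop :=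
  AlgCon.delta L A ∈ S ∧ AlgCon.nabla L A ∈ S ∧
  (∀ θ ∈ S, ∀ δ ∈ S, θ.inf δ ∈ S) ∧
  (∀ θ ∈ S, ∀ δ ∈ S, θ.sup δ ∈ S) ∧
  (∀ θ ∈ S, ∀ δ ∈ S, ∀ γ ∈ S, θ.inf (δ.sup γ) = (θ.inf δ).sup (θ.inf γ)) ∧
  (∀ θ ∈ S, ∃ δ ∈ S, θ.inf δ = AlgCon.delta L A ∧ θ.sup δ = AlgCon.nabla L A)

/-- An identity (equation between two terms in finitely many variables). -/
structure Identity (L : FirstOrder.Language.{0, 0}) where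
  nvars : ℕ
  lhs : L.Term (Fin nvars)
  rhs : L.Term (Fin nvars)

/-- An identity holds in an algebra. -/
def Identity.Holds (e : Identity L) (A : Type u) [L.Structure A] : Prop :=
  ∀ v : Fin e.nvars → A, e.lhs.realize v = e.rhs.realize v

/-- Membership of an algebra in the variety axiomatized by the set of identities `E`. -/
def InVariety (E : Set (Identity L)) (A : Type u) [L.Structure A] : Prop :=
  ∀ e ∈ E, e.Holds A

/-- The data of the closed terms 0₁, …, 0ₙ and 1₁, …, 1ₙ. -/
structure ZeroOneData (L : FirstOrder.Language.{0, 0}) where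
  n : ℕ
  npos : 0 < n
  zero : Fin n → L.Term Empty
  one : Fin n → L.Term Empty

/-- The interpretation of the tuple 0⃗ in an algebra. -/
def ZeroOneData.zeroA (Z : ZeroOneData L) (A : Type u) [L.Structure A] : Fin Z.n → A :=
  fun i => (Z.zero i).realize Empty.elim

/-- The interpretation of the tuple 1⃗ in an algebra. -/
def ZeroOneData.oneA (Z : ZeroOneData L) (A : Type u) [L.Structure A] : Fin Z.n → A :=
  fun i => (Z.one i).realize Empty.elim

/-- `V ⊨ (0⃗ ≈ 1⃗) → x ≈ y`: `V` is a variety with 0⃗ and 1⃗. -/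
def ZeroOneData.Separates (Z : ZeroOneData L) (E : Set (Identity L)) : Prop :=
  ∀ (A : Type u) [L.Structure A], InVariety E A →
    (∀ i, Z.zeroA A i = Z.oneA A i) → Subsingleton A

/-- Product structure on `A × B`. -/
instance prodStructure (A : Type u) (B : Type u) [L.Structure A] [L.Structure B] :
    L.Structure (A × B) where
  funMap := fun f x => (funMap f (fun i => (x i).1), funMap f (fun i => (x i).2))
  RelMap := fun r x => RelMap r (fun i => (x i).1) ∧ RelMap r (fun i => (x i).2)

/-- A witness that `e⃗` is a central element of `A`: an isomorphism
`τ : A ≅ A₁ × A₂` with `A₁, A₂ ∈ V` and `τ(e⃗) = [0⃗, 1⃗]`. -/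
structure CentralWitness (E : Set (Identity L)) (Z : ZeroOneData L)
    (A : Type u) [L.Structure A] (e : Fin Z.n → A) : Type (u + 1) where
  A₁ : Type u
  A₂ : Type u
  [s₁ : L.Structure A₁]
  [s₂ : L.Structure A₂]
  mem₁ : InVariety E A₁
  mem₂ : InVariety E A₂
  iso : A ≃[L] (A₁ × A₂)
  he : ∀ i, iso (e i) = (Z.zeroA A₁ i, Z.oneA A₂ i)

/-- A witness that `e⃗` and `f⃗` are complementary central elements of `A`. -/
structure ComplCentralWitness (E : Set (Identity L)) (Z : ZeroOneData L)
    (A : Type u) [L.Structure A] (e f : Fin Z.n → A) extends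
    CentralWitness E Z A e : Type (u + 1) where
  hf : ∀ i, iso (f i) = (Z.oneA A₁ i, Z.zeroA A₂ i)

/-- `e⃗` is a central element of `A`. -/
def IsCentral (E : Set (Identity L)) (Z : ZeroOneData L)
    (A : Type u) [L.Structure A] (e : Fin Z.n → A) : Prop :=
  Nonempty (CentralWitness E Z A e)

/-- `e⃗ ⋄_A f⃗`: `e⃗` and `f⃗` are complementary central elements of `A`. -/
def CentDiamond (E : Set (Identity L)) (Z : ZeroOneData L)
    (A : Type u) [L.Structure A] (e f : Fin Z.n → A) : Prop :=
  Nonempty (ComplCentralWitness E Z A e f)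

/-- `V` has Boolean factor congruences: for every `A ∈ V`, `FC(A)` is a Boolean
sublattice of `Con(A)`. -/
def HasBFC (E : Set (Identity L)) : Prop :=
  ∀ (A : Type u) [L.Structure A], InVariety E A → IsBooleanSublattice (FC L A)

/-- `V` is stable by complements: every homomorphism between members of `V`
preserves complementary central elements. -/
def StableByComplements (E : Set (Identity L)) (Z : ZeroOneData L) : Prop :=
  ∀ (A B : Type u) [L.Structure A] [L.Structure B], InVariety E A → InVariety E B →
    ∀ (f : A →[L] B) (e g : Fin Z.n → A), CentDiamond E Z A e g →
      CentDiamond E Z B (fun i => f (e i)) (fun i => f (g i))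

/-- A formula is existential: of the form ∃w⃗ ψ with ψ quantifier-free. -/
def IsExistentialForm {α : Type*} (φ : L.Formula α) : Prop :=
  ∃ (m : ℕ) (ψ : L.BoundedFormula α m), ψ.IsQF ∧ φ = ψ.exs

/-- The formula λ(z⃗, x, y) satisfies the condition (R): for all `A, B ∈ V`,
`A × B ⊨ λ([0⃗,1⃗], (a,c), (b,d))` iff `c = d`. -/
def RightFormulaWorks (E : Set (Identity L)) (Z : ZeroOneData L)
    (φ : L.Formula ((Fin Z.n) ⊕ (Fin 2))) : Prop :=
  ∀ (A B : Type u) [L.Structure A] [L.Structure B], InVariety E A → InVariety E B →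
    ∀ (a b : A) (c d : B),
      (φ.Realize (M := A × B)
        (Sum.elim (fun i => (Z.zeroA A i, Z.oneA B i)) ![(a, c), (b, d)]) ↔ c = d)

/-- The formula ρ(z⃗, x, y) satisfies the condition (L): for all `A, B ∈ V`,
`A × B ⊨ ρ([0⃗,1⃗], (a,c), (b,d))` iff `a = b`. -/
def LeftFormulaWorks (E : Set (Identity L)) (Z : ZeroOneData L)
    (φ : L.Formula ((Fin Z.n) ⊕ (Fin 2))) : Prop :=
  ∀ (A B : Type u) [L.Structure A] [L.Structure B], InVariety E A → InVariety E B →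
    ∀ (a b : A) (c d : B),
      (φ.Realize (M := A × B)
        (Sum.elim (fun i => (Z.zeroA A i, Z.oneA B i)) ![(a, c), (b, d)]) ↔ a = b)

/-- `V` has right existentially definable factor congruences. -/
def HasRexDFC (E : Set (Identity L)) (Z : ZeroOneData L) : Prop :=
  HasBFC.{u} E ∧ ∃ φ : L.Formula ((Fin Z.n) ⊕ (Fin 2)),
    IsExistentialForm φ ∧ RightFormulaWorks.{u} E Z φ

/-- `V` has left existentially definable factor congruences. -/
def HasLexDFC (E : Set (Identity L)) (Z : ZeroOneData L) : Prop :=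
  HasBFC.{u} E ∧ ∃ φ : L.Formula ((Fin Z.n) ⊕ (Fin 2)),
    IsExistentialForm φ ∧ LeftFormulaWorks.{u} E Z φ

/-- `(θ, δ)` is the pair of complementary factor congruences associated with the
central element `e⃗`, i.e. `θ ⋄ δ`, `[e⃗,0⃗] ∈ θ` and `[e⃗,1⃗] ∈ δ`. -/
def PairFor (Z : ZeroOneData L) (A : Type u) [L.Structure A]
    (e : Fin Z.n → A) (θ δ : AlgCon L A) : Prop :=
  IsComplFC θ δ ∧ inCon θ e (Z.zeroA A) ∧ inCon δ e (Z.oneA A)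

/-- `a⃗ = e⃗ ∧ f⃗` in the center: `[a⃗,0⃗] ∈ θ_{0,e} ∩ θ_{0,f}` and `[a⃗,1⃗] ∈ θ_{1,e} ∨ θ_{1,f}`. -/
def IsMeetOf (Z : ZeroOneData L) (A : Type u) [L.Structure A]
    (e f a : Fin Z.n → A) : Prop :=
  ∃ θ₀e θ₁e θ₀f θ₁f : AlgCon L A, PairFor Z A e θ₀e θ₁e ∧ PairFor Z A f θ₀f θ₁f ∧
    inCon (θ₀e.inf θ₀f) a (Z.zeroA A) ∧ inCon (θ₁e.sup θ₁f) a (Z.oneA A)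

/-- `a⃗ = e⃗ ∨ f⃗` in the center: `[a⃗,0⃗] ∈ θ_{0,e} ∨ θ_{0,f}` and `[a⃗,1⃗] ∈ θ_{1,e} ∩ θ_{1,f}`. -/
def IsJoinOf (Z : ZeroOneData L) (A : Type u) [L.Structure A]
    (e f a : Fin Z.n → A) : Prop :=
  ∃ θ₀e θ₁e θ₀f θ₁f : AlgCon L A, PairFor Z A e θ₀e θ₁e ∧ PairFor Z A f θ₀f θ₁f ∧
    inCon (θ₀e.sup θ₀f) a (Z.zeroA A) ∧ inCon (θ₁e.inf θ₁f) a (Z.oneA A)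

/-- `a⃗ = e⃗^c` in the center: `[a⃗,1⃗] ∈ θ_{0,e}` and `[a⃗,0⃗] ∈ θ_{1,e}`. -/
def IsComplOf (Z : ZeroOneData L) (A : Type u) [L.Structure A]
    (e a : Fin Z.n → A) : Prop :=
  ∃ θ₀e θ₁e : AlgCon L A, PairFor Z A e θ₀e θ₁e ∧
    inCon θ₀e a (Z.oneA A) ∧ inCon θ₁e a (Z.zeroA A)

section Quotient

variable {A : Type u} [L.Structure A]

/-- The setoid underlying a congruence. -/
def AlgCon.setoid (c : AlgCon L A) : Setoid A :=
  ⟨c.r, ⟨c.refl, fun h => c.symm h, fun h1 h2 => c.trans h1 h2⟩⟩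

/-- The quotient algebra `A/θ`. -/
def ConQuot (c : AlgCon L A) : Type u := Quotient c.setoid

/-- The class of `a` in `A/θ`. -/
def ConQuot.mk (c : AlgCon L A) (a : A) : ConQuot c := Quotient.mk c.setoid a

noncomputable instance conQuotStructure (c : AlgCon L A) : L.Structure (ConQuot c) where
  funMap := fun f x => ConQuot.mk c (funMap f (fun i => (Quotient.out (α := A) (s := c.setoid) (x i))))
  RelMap := fun r x => ∃ as : Fin _ → A, (∀ i, ConQuot.mk c (as i) = x i) ∧ RelMap r as

theorem conQuot_funMap_mk (c : AlgCon L A) {m : ℕ} (f : L.Functions m) (as : Fin m → A) :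
    funMap f (fun i => ConQuot.mk c (as i)) = ConQuot.mk c (funMap f as) := by
  show ConQuot.mk c _ = ConQuot.mk c _
  apply Quotient.sound
  apply c.compat
  intro i
  exact Quotient.mk_out (s := c.setoid) (as i)

/-- The canonical quotient homomorphism `A → A/θ`. -/
def conQuotMk (c : AlgCon L A) : A →[L] ConQuot c where
  toFun := ConQuot.mk c
  map_fun' := fun f x => (conQuot_funMap_mk c f x).symm
  map_rel' := fun _r x h => ⟨x, fun _ => rfl, h⟩

end Quotient

end Paper



open Paper


namespace Paper

open FirstOrder.Language

variable {L : FirstOrder.Language.{0, 0}}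

section Lattice

variable {A : Type u} [L.Structure A]

theorem AlgCon.sup_left {c d : AlgCon L A} {a b : A} (h : c.r a b) : (c.sup d).r a b :=
  fun e he => he a b (Or.inl h)

theorem AlgCon.sup_right {c d : AlgCon L A} {a b : A} (h : d.r a b) : (c.sup d).r a b :=
  fun e he => he a b (Or.inr h)

theorem AlgCon.sup_min {c d e : AlgCon L A} (hc : ∀ a b, c.r a b → e.r a b)
    (hd : ∀ a b, d.r a b → e.r a b) {a b : A} (h : (c.sup d).r a b) : e.r a b :=
  h e (fun x y hxy => hxy.elim (hc x y) (hd x y))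

theorem AlgCon.sup_comm' (c d : AlgCon L A) : c.sup d = d.sup c := by
  apply AlgCon.ext'
  intro a b
  constructor
  · exact fun h => AlgCon.sup_min (fun x y => AlgCon.sup_right) (fun x y => AlgCon.sup_left) h
  · exact fun h => AlgCon.sup_min (fun x y => AlgCon.sup_right) (fun x y => AlgCon.sup_left) h

theorem AlgCon.inf_comm' (c d : AlgCon L A) : c.inf d = d.inf c := by
  apply AlgCon.ext'; intro a b; exact and_comm

/-- absorption: (x ⊔ y) ⊓ x = x -/
theorem AlgCon.sup_inf_self (x y : AlgCon L A) : (x.sup y).inf x = x := by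
  apply AlgCon.ext'; intro a b
  exact ⟨fun h => h.2, fun h => ⟨AlgCon.sup_left h, h⟩⟩

/-- x ⊔ y = x when y ≤ x -/
theorem AlgCon.sup_of_le {x y : AlgCon L A} (h : ∀ a b, y.r a b → x.r a b) : x.sup y = x := by
  apply AlgCon.ext'; intro a b
  exact ⟨fun hs => AlgCon.sup_min (fun _ _ hh => hh) h hs, fun hx => AlgCon.sup_left hx⟩

theorem AlgCon.inf_nabla (x : AlgCon L A) : x.inf (AlgCon.nabla L A) = x := by
  apply AlgCon.ext'; intro a b
  exact ⟨fun h => h.1, fun h => ⟨h, trivial⟩⟩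

theorem IsComplFC.sup_eq_nabla {θ δ : AlgCon L A} (h : IsComplFC θ δ) :
    θ.sup δ = AlgCon.nabla L A := by
  apply AlgCon.ext'; intro a b
  refine ⟨fun _ => trivial, fun _ => ?_⟩
  obtain ⟨z, hz1, hz2⟩ := h.2 a b
  exact AlgCon.trans _ (AlgCon.sup_left hz1) (AlgCon.sup_right hz2)

theorem IsComplFC.symm' {θ δ : AlgCon L A} (h : IsComplFC θ δ) : IsComplFC δ θ := by
  constructor
  · rw [AlgCon.inf_comm']; exact h.1
  · intro a b
    obtain ⟨z, hz1, hz2⟩ := h.2 b a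
    exact ⟨z, AlgCon.symm _ hz2, AlgCon.symm _ hz1⟩

theorem IsComplFC.mem_FC {θ δ : AlgCon L A} (h : IsComplFC θ δ) : θ ∈ FC L A := ⟨δ, h⟩

theorem IsComplFC.inf_eq {θ δ : AlgCon L A} (h : IsComplFC θ δ) {a b : A}
    (h1 : θ.r a b) (h2 : δ.r a b) : a = b := by
  have := h.1
  have : (θ.inf δ).r a b := ⟨h1, h2⟩
  rw [h.1] at this
  exact this

end Lattice

end Paper

namespace Paper

open FirstOrder.Language FirstOrder.Language.Structure

variable {L : FirstOrder.Language.{0, 0}}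

section Products

variable {A B : Type u} [L.Structure A] [L.Structure B]

theorem realize_term_prod {α : Type*} (t : L.Term α) (v : α → A × B) :
    Term.realize v t =
      (Term.realize (fun i => (v i).1) t, Term.realize (fun i => (v i).2) t) := by
  induction t with
  | var i => rfl
  | func f ts ih =>
    show funMap f _ = _
    have : (funMap f fun i => Term.realize v (ts i) : A × B) =
        (funMap f (fun i => (Term.realize v (ts i)).1),
         funMap f (fun i => (Term.realize v (ts i)).2)) := rfl
    simp only [Term.realize, this]
    congr 1 <;> · congr 1; funext i; rw [ih i]

theorem zeroA_prod (Z : ZeroOneData L) (i : Fin Z.n) :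
    Z.zeroA (A × B) i = (Z.zeroA A i, Z.zeroA B i) := by
  show Term.realize _ _ = _
  rw [realize_term_prod]
  refine Prod.ext ?_ ?_ <;> · show Term.realize _ _ = Term.realize _ _; congr 1; funext e; exact e.elim

theorem oneA_prod (Z : ZeroOneData L) (i : Fin Z.n) :
    Z.oneA (A × B) i = (Z.oneA A i, Z.oneA B i) := by
  show Term.realize _ _ = _
  rw [realize_term_prod]
  refine Prod.ext ?_ ?_ <;> · show Term.realize _ _ = Term.realize _ _; congr 1; funext e; exact e.elim

theorem InVariety.prod {E : Set (Identity L)} (hA : InVariety E A) (hB : InVariety E B) :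
    InVariety E (A × B) := by
  intro e he v
  rw [realize_term_prod, realize_term_prod, hA e he, hB e he]

end Products

section Pi

variable {ι : Type*} (C : ι → Type u) [∀ s, L.Structure (C s)]

instance piStructure : L.Structure (∀ s, C s) where
  funMap := fun f x s => funMap f (fun i => x i s)
  RelMap := fun _ _ => True

variable {C}

theorem realize_term_pi {α : Type*} (t : L.Term α) (v : α → ∀ s, C s) (s : ι) :
    Term.realize v t s = Term.realize (fun i => v i s) t := by
  induction t with
  | var i => rfl
  | func f ts ih =>
    show funMap f (fun i => Term.realize v (ts i)) s = funMap f _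
    show funMap f (fun i => Term.realize v (ts i) s) = _
    congr 1; funext i; exact ih i

theorem InVariety.pi {E : Set (Identity L)} (h : ∀ s, InVariety E (C s)) :
    InVariety E (∀ s, C s) := by
  intro e he v
  funext s
  rw [realize_term_pi, realize_term_pi, h s e he]

end Pi

section QuotientLemmas

variable {A : Type u} [L.Structure A]

theorem realize_term_quot (c : AlgCon L A) {α : Type*} (t : L.Term α) (as : α → A) :
    Term.realize (fun i => ConQuot.mk c (as i)) t = ConQuot.mk c (Term.realize as t) := by
  induction t with
  | var i => rfl
  | func f ts ih =>
    show funMap f (fun i => Term.realize _ (ts i)) = _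
    have h1 : (fun i => Term.realize (fun j => ConQuot.mk c (as j)) (ts i)) =
        (fun i => ConQuot.mk c (Term.realize as (ts i))) := by funext i; exact ih i
    rw [h1, conQuot_funMap_mk]
    rfl

theorem InVariety.quot {E : Set (Identity L)} (hA : InVariety E A) (c : AlgCon L A) :
    InVariety E (ConQuot c) := by
  intro e he v
  have hv : v = fun i => ConQuot.mk c (Quotient.out (s := c.setoid) (v i)) := by
    funext i
    exact (Quotient.out_eq (v i)).symm
  rw [hv, realize_term_quot, realize_term_quot, hA e he]

theorem quot_zeroA (c : AlgCon L A) (Z : ZeroOneData L) (i : Fin Z.n) :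
    Z.zeroA (ConQuot c) i = ConQuot.mk c (Z.zeroA A i) := by
  show Term.realize _ _ = _
  have : (Empty.elim : Empty → ConQuot c) = fun e => ConQuot.mk c (Empty.elim e) := by
    funext e; exact e.elim
  rw [this, realize_term_quot]
  rfl

theorem quot_oneA (c : AlgCon L A) (Z : ZeroOneData L) (i : Fin Z.n) :
    Z.oneA (ConQuot c) i = ConQuot.mk c (Z.oneA A i) := by
  show Term.realize _ _ = _
  have : (Empty.elim : Empty → ConQuot c) = fun e => ConQuot.mk c (Empty.elim e) := by
    funext e; exact e.elim
  rw [this, realize_term_quot]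
  rfl

theorem conQuot_mk_eq_iff {c : AlgCon L A} {a b : A} :
    ConQuot.mk c a = ConQuot.mk c b ↔ c.r a b := by
  constructor
  · intro h; exact Quotient.exact h
  · intro h; exact Quotient.sound (s := c.setoid) h

/-- A congruence relating all the `0ᵢ` to the `1ᵢ` is the total congruence. -/
theorem eq_nabla_of_rel_zero_one {E : Set (Identity L)} (Z : ZeroOneData L)
    (hsep : ZeroOneData.Separates.{u} Z E) (hA : InVariety E A)
    {c : AlgCon L A} (h : ∀ i, c.r (Z.zeroA A i) (Z.oneA A i)) :
    c = AlgCon.nabla L A := by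
  apply AlgCon.ext'
  intro a b
  refine ⟨fun _ => trivial, fun _ => ?_⟩
  have hsub : Subsingleton (ConQuot c) := by
    apply hsep (ConQuot c) (hA.quot c)
    intro i
    rw [quot_zeroA, quot_oneA, conQuot_mk_eq_iff]
    exact h i
  rw [← conQuot_mk_eq_iff (c := c)]
  exact hsub.elim _ _

end QuotientLemmas

end Paper

namespace Paper

open FirstOrder.Language FirstOrder.Language.Structure

variable {L : FirstOrder.Language.{0, 0}}

section HomLemmas

variable {M N : Type u} [L.Structure M] [L.Structure N]

theorem hom_realize_closed (h : M →[L] N) (t : L.Term Empty) :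
    h (Term.realize Empty.elim t) = Term.realize Empty.elim t := by
  have := HomClass.realize_term h (t := t) (v := Empty.elim)
  rw [← this]
  congr 1
  funext e
  exact e.elim

theorem hom_zeroA (h : M →[L] N) (Z : ZeroOneData L) (i : Fin Z.n) :
    h (Z.zeroA M i) = Z.zeroA N i := hom_realize_closed h (Z.zero i)

theorem hom_oneA (h : M →[L] N) (Z : ZeroOneData L) (i : Fin Z.n) :
    h (Z.oneA M i) = Z.oneA N i := hom_realize_closed h (Z.one i)

theorem equiv_realize_closed (h : M ≃[L] N) (t : L.Term Empty) :
    h (Term.realize Empty.elim t) = Term.realize Empty.elim t :=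
  hom_realize_closed h.toHom t

theorem equiv_zeroA (h : M ≃[L] N) (Z : ZeroOneData L) (i : Fin Z.n) :
    h (Z.zeroA M i) = Z.zeroA N i := equiv_realize_closed h (Z.zero i)

theorem equiv_oneA (h : M ≃[L] N) (Z : ZeroOneData L) (i : Fin Z.n) :
    h (Z.oneA M i) = Z.oneA N i := equiv_realize_closed h (Z.one i)

end HomLemmas

section ProdHoms

variable [L.IsAlgebraic]

/-- The product of two homomorphisms. -/
def prodMapHom {A B C D : Type u} [L.Structure A] [L.Structure B] [L.Structure C]
    [L.Structure D] (f : A →[L] C) (g : B →[L] D) : (A × B) →[L] (C × D) where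
  toFun := fun p => (f p.1, g p.2)
  map_fun' := fun {m} F x => by
    show ((f (funMap F fun i => (x i).1)), g (funMap F fun i => (x i).2)) =
      (funMap F (fun i => f (x i).1), funMap F (fun i => g (x i).2))
    rw [f.map_fun, g.map_fun]; rfl
  map_rel' := fun {m} r _ => isEmptyElim r

/-- The swap isomorphism `A × B ≃ B × A`. -/
def swapEquiv (A B : Type u) [L.Structure A] [L.Structure B] : (A × B) ≃[L] (B × A) where
  toEquiv := Equiv.prodComm A B
  map_fun' := fun {m} F x => rfl
  map_rel' := fun {m} r _ => isEmptyElim r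

end ProdHoms

end Paper

namespace Paper

open FirstOrder.Language FirstOrder.Language.Structure

variable {L : FirstOrder.Language.{0, 0}}

section Kernels

variable {C : Type u} [L.Structure C]

/-- Kernel of the first projection composed with an isomorphism onto a product. -/
def kerFst {A₁ A₂ : Type u} [L.Structure A₁] [L.Structure A₂]
    (τ : C ≃[L] (A₁ × A₂)) : AlgCon L C where
  r := fun a b => (τ a).1 = (τ b).1
  refl := fun _ => rfl
  symm := fun h => h.symm
  trans := fun h1 h2 => h1.trans h2
  compat := fun f x y h => by
    show (τ (funMap f x)).1 = (τ (funMap f y)).1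
    rw [τ.map_fun, τ.map_fun]
    show (funMap f fun i => (τ (x i)).1) = (funMap f fun i => (τ (y i)).1)
    congr 1
    funext i
    exact h i

def kerSnd {A₁ A₂ : Type u} [L.Structure A₁] [L.Structure A₂]
    (τ : C ≃[L] (A₁ × A₂)) : AlgCon L C where
  r := fun a b => (τ a).2 = (τ b).2
  refl := fun _ => rfl
  symm := fun h => h.symm
  trans := fun h1 h2 => h1.trans h2
  compat := fun f x y h => by
    show (τ (funMap f x)).2 = (τ (funMap f y)).2
    rw [τ.map_fun, τ.map_fun]
    show (funMap f fun i => (τ (x i)).2) = (funMap f fun i => (τ (y i)).2)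
    congr 1
    funext i
    exact h i

theorem ker_complFC {A₁ A₂ : Type u} [L.Structure A₁] [L.Structure A₂]
    (τ : C ≃[L] (A₁ × A₂)) : IsComplFC (kerFst τ) (kerSnd τ) := by
  constructor
  · apply AlgCon.ext'
    intro a b
    show ((τ a).1 = (τ b).1 ∧ (τ a).2 = (τ b).2) ↔ a = b
    constructor
    · rintro ⟨h1, h2⟩
      exact τ.injective (Prod.ext h1 h2)
    · rintro rfl; exact ⟨rfl, rfl⟩
  · intro a b
    refine ⟨τ.symm ((τ a).1, (τ b).2), ?_, ?_⟩
    · show (τ a).1 = (τ (τ.symm _)).1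
      rw [τ.apply_symm_apply]
    · show (τ (τ.symm _)).2 = (τ b).2
      rw [τ.apply_symm_apply]

/-- Extract the factor-congruence pair data from a complementary-central-element witness. -/
theorem witness_pair {E : Set (Identity L)} {Z : ZeroOneData L} {e f : Fin Z.n → C}
    (W : ComplCentralWitness E Z C e f) :
    ∃ θ δ : AlgCon L C, IsComplFC θ δ ∧ inCon θ e (Z.zeroA C) ∧ inCon δ e (Z.oneA C) ∧
      inCon θ f (Z.oneA C) ∧ inCon δ f (Z.zeroA C) := by
  letI := W.s₁
  letI := W.s₂
  refine ⟨kerFst W.iso, kerSnd W.iso, ker_complFC W.iso, ?_, ?_, ?_, ?_⟩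
  · intro i
    show (W.iso (e i)).1 = (W.iso (Z.zeroA C i)).1
    rw [W.he i, equiv_zeroA W.iso, zeroA_prod]
  · intro i
    show (W.iso (e i)).2 = (W.iso (Z.oneA C i)).2
    rw [W.he i, equiv_oneA W.iso, oneA_prod]
  · intro i
    show (W.iso (f i)).1 = (W.iso (Z.oneA C i)).1
    rw [W.hf i, equiv_oneA W.iso, oneA_prod]
  · intro i
    show (W.iso (f i)).2 = (W.iso (Z.zeroA C i)).2
    rw [W.hf i, equiv_zeroA W.iso, zeroA_prod]

end Kernels

section Unique

variable {E : Set (Identity L)} {Z : ZeroOneData L} {C : Type u} [L.Structure C]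

/-- Key lattice computation in the Boolean sublattice of factor congruences. -/
theorem key_lattice (hB : IsBooleanSublattice (FC L C)) {x y z : AlgCon L C}
    (hx : x ∈ FC L C) (hy : y ∈ FC L C) (hz : z ∈ FC L C)
    (hyz : y.inf z = AlgCon.delta L C) (hxz : x.sup z = AlgCon.nabla L C) :
    x.sup y = x := by
  obtain ⟨_, _, hinf, hsup, hdist, _⟩ := hB
  have hxy : x.sup y ∈ FC L C := hsup x hx y hy
  have step1 : x.sup y = (x.sup y).inf (x.sup z) := by
    rw [hxz, AlgCon.inf_nabla]
  have step2 : (x.sup y).inf (x.sup z) = ((x.sup y).inf x).sup ((x.sup y).inf z) :=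
    hdist _ hxy _ hx _ hz
  have step3 : (x.sup y).inf x = x := AlgCon.sup_inf_self x y
  have step4 : (x.sup y).inf z = (z.inf x).sup (z.inf y) := by
    rw [AlgCon.inf_comm']
    exact hdist _ hz _ hx _ hy
  have step5 : z.inf y = AlgCon.delta L C := by rw [AlgCon.inf_comm']; exact hyz
  have step6 : (z.inf x).sup (AlgCon.delta L C) = z.inf x := by
    apply AlgCon.sup_of_le
    intro a b h
    exact h ▸ AlgCon.refl _ a
  have step7 : x.sup (z.inf x) = x := by
    apply AlgCon.sup_of_le
    intro a b h
    exact h.2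
  rw [step1, step2, step3, step4, step5, step6, step7]

theorem pair_unique (hsep : ZeroOneData.Separates.{u} Z E)
    (hC : InVariety E C) (hB : IsBooleanSublattice (FC L C))
    {e : Fin Z.n → C} {θ δ θ' δ' : AlgCon L C}
    (h1 : IsComplFC θ δ) (h2 : IsComplFC θ' δ')
    (he0 : inCon θ e (Z.zeroA C)) (he1 : inCon δ e (Z.oneA C))
    (he0' : inCon θ' e (Z.zeroA C)) (he1' : inCon δ' e (Z.oneA C)) :
    θ = θ' ∧ δ = δ' := by
  have hθ : θ ∈ FC L C := h1.mem_FC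
  have hδ : δ ∈ FC L C := h1.symm'.mem_FC
  have hθ' : θ' ∈ FC L C := h2.mem_FC
  have hδ' : δ' ∈ FC L C := h2.symm'.mem_FC
  have F1 : θ.sup δ' = AlgCon.nabla L C := by
    apply eq_nabla_of_rel_zero_one Z hsep hC
    intro i
    exact AlgCon.trans _ (AlgCon.sup_left (AlgCon.symm _ (he0 i))) (AlgCon.sup_right (he1' i))
  have F2 : θ'.sup δ = AlgCon.nabla L C := by
    apply eq_nabla_of_rel_zero_one Z hsep hC
    intro i
    exact AlgCon.trans _ (AlgCon.sup_left (AlgCon.symm _ (he0' i))) (AlgCon.sup_right (he1 i))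
  have hθθ' : θ.sup θ' = θ := key_lattice hB hθ hθ' hδ' h2.1 F1
  have hθ'θ : θ'.sup θ = θ' := key_lattice hB hθ' hθ hδ h1.1 F2
  have hts : θ = θ' := by rw [← hθθ', AlgCon.sup_comm', hθ'θ]
  have G1 : δ.sup θ' = AlgCon.nabla L C := by rw [AlgCon.sup_comm']; exact F2
  have G2 : δ'.sup θ = AlgCon.nabla L C := by rw [AlgCon.sup_comm']; exact F1
  have hδδ' : δ.sup δ' = δ := key_lattice hB hδ hδ' hθ' (h2.symm'.1) G1
  have hδ'δ : δ'.sup δ = δ' := key_lattice hB hδ' hδ hθ (h1.symm'.1) G2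
  have hds : δ = δ' := by rw [← hδδ', AlgCon.sup_comm', hδ'δ]
  exact ⟨hts, hds⟩

/-- Uniqueness of the complement of a central element. -/
theorem compl_unique (hsep : ZeroOneData.Separates.{u} Z E)
    (hC : InVariety E C) (hB : IsBooleanSublattice (FC L C))
    {e f f' : Fin Z.n → C}
    (w1 : CentDiamond E Z C e f) (w2 : CentDiamond E Z C e f') : f = f' := by
  obtain ⟨W1⟩ := w1
  obtain ⟨W2⟩ := w2
  obtain ⟨θ, δ, hc, he0, he1, hf1, hf0⟩ := witness_pair W1
  obtain ⟨θ', δ', hc', he0', he1', hf1', hf0'⟩ := witness_pair W2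
  obtain ⟨hts, hds⟩ := pair_unique hsep hC hB hc hc' he0 he1 he0' he1'
  subst hts; subst hds
  funext i
  apply hc.inf_eq
  · exact AlgCon.trans _ (hf1 i) (AlgCon.symm _ (hf1' i))
  · exact AlgCon.trans _ (hf0 i) (AlgCon.symm _ (hf0' i))

end Unique

end Paper

namespace Paper

open FirstOrder.Language FirstOrder.Language.Structure

variable {L : FirstOrder.Language.{0, 0}}

section TermAlg

variable [L.IsAlgebraic]

/-- The algebra of closed terms (lifted to universe `u`). -/
def TA (L : FirstOrder.Language.{0, 0}) : Type u := ULift.{u} (L.Term Empty)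

instance taStructure : L.Structure (TA.{u} L) where
  funMap := fun f x => ⟨Term.func f (fun i => (x i).down)⟩
  RelMap := fun r _ => isEmptyElim r

theorem ta_realize_eq {α : Type*} (t : L.Term α) (σ : α → L.Term Empty) :
    Term.realize (M := TA.{u} L) (fun i => ⟨σ i⟩) t = ⟨t.subst σ⟩ := by
  induction t with
  | var i => rfl
  | func f ts ih =>
    show funMap f (fun i => Term.realize _ (ts i)) = _
    have : (fun i => Term.realize (M := TA.{u} L) (fun j => ⟨σ j⟩) (ts i)) =
        fun i => (⟨(ts i).subst σ⟩ : TA.{u} L) := by funext i; exact ih i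
    rw [this]
    rfl

variable (E : Set (Identity L))

/-- The congruence identifying closed terms with the same value in every member of `V`. -/
def R0 : AlgCon L (TA.{u} L) where
  r := fun s t => ∀ (A : Type u) (iA : L.Structure A), InVariety E A →
    Term.realize (M := A) Empty.elim s.down = Term.realize (M := A) Empty.elim t.down
  refl := fun _ _ _ _ => rfl
  symm := fun h A iA hA => (h A iA hA).symm
  trans := fun h1 h2 A iA hA => (h1 A iA hA).trans (h2 A iA hA)
  compat := fun f x y h A iA hA => by
    show Term.realize Empty.elim (Term.func f fun i => (x i).down) =
      Term.realize Empty.elim (Term.func f fun i => (y i).down)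
    show funMap f (fun i => Term.realize Empty.elim ((x i).down)) =
      funMap f (fun i => Term.realize Empty.elim ((y i).down))
    congr 1
    funext i
    exact h i A iA hA

/-- The initial algebra of the variety: closed terms modulo `V`-equivalence. -/
def TAlg : Type u := ConQuot (R0.{u} E)

noncomputable instance tAlgStructure : L.Structure (TAlg.{u} E) :=
  conQuotStructure (R0.{u} E)

theorem tAlg_inVariety : InVariety E (TAlg.{u} E) := by
  intro e he v
  set σ : Fin e.nvars → L.Term Empty :=
    fun i => (Quotient.out (s := (R0.{u} E).setoid) (v i)).down with hσ
  have hv : v = fun i => ConQuot.mk (R0.{u} E) ⟨σ i⟩ := by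
    funext i
    show v i = ConQuot.mk (R0.{u} E) (Quotient.out (s := (R0.{u} E).setoid) (v i))
    exact (Quotient.out_eq (v i)).symm
  rw [hv]
  have h1 : ∀ (t : L.Term (Fin e.nvars)),
      Term.realize (M := TAlg.{u} E) (fun i => ConQuot.mk (R0.{u} E) ⟨σ i⟩) t =
        ConQuot.mk (R0.{u} E) ⟨t.subst σ⟩ := by
    intro t
    exact (realize_term_quot (R0.{u} E) t (fun i => (⟨σ i⟩ : TA.{u} L))).trans
      (congrArg (ConQuot.mk (R0.{u} E)) (ta_realize_eq t σ))
  rw [h1 e.lhs, h1 e.rhs]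
  refine conQuot_mk_eq_iff.mpr ?_
  intro A iA hA
  letI := iA
  show Term.realize (M := A) Empty.elim (Term.subst e.lhs σ) =
    Term.realize (M := A) Empty.elim (Term.subst e.rhs σ)
  rw [Term.realize_subst, Term.realize_subst]
  exact hA e he (fun i => Term.realize Empty.elim (σ i))

/-- The canonical homomorphism from the initial algebra to any member of `V`. -/
noncomputable def homT (A : Type u) (iA : L.Structure A) (hA : InVariety E A) :
    TAlg.{u} E →[L] A := by
  letI := iA
  exact
  { toFun := Quotient.lift (fun s : TA.{u} L => Term.realize (M := A) Empty.elim s.down)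
      (fun s t hst => hst A iA hA)
    map_fun' := by
      intro m f x
      have hx : x = fun i => ConQuot.mk (R0.{u} E)
          (Quotient.out (s := (R0.{u} E).setoid) (x i)) := by
        funext i; exact (Quotient.out_eq (x i)).symm
      have key := conQuot_funMap_mk (R0.{u} E) f
        (fun i => Quotient.out (s := (R0.{u} E).setoid) (x i))
      rw [hx]
      refine (congrArg (Quotient.lift (s := (R0.{u} E).setoid) (fun s : TA.{u} L => Term.realize (M := A) Empty.elim s.down)
        (fun s t hst => hst A iA hA)) key).trans ?_
      show Term.realize Empty.elim (Term.func f _) = _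
      show funMap f (fun i => Term.realize (M := A) Empty.elim
        ((Quotient.out (s := (R0.{u} E).setoid) (x i)).down)) = _
      rfl
    map_rel' := fun r _ => isEmptyElim r }

theorem homT_mk (A : Type u) (iA : L.Structure A) (hA : InVariety E A) (s : TA.{u} L) :
    homT E A iA hA (ConQuot.mk (R0.{u} E) s) =
      @Term.realize L A iA Empty Empty.elim s.down := rfl

end TermAlg

end Paper

namespace Paper

open FirstOrder.Language FirstOrder.Language.Structure

variable {L : FirstOrder.Language.{0, 0}}

section Compactness

variable [L.IsAlgebraic] (E : Set (Identity L)) (Z : ZeroOneData L)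

/-- `[0,1]` in `T × T`. -/
noncomputable def ebar : Fin Z.n → (TAlg.{u} E × TAlg.{u} E) :=
  fun i => (Z.zeroA (TAlg.{u} E) i, Z.oneA (TAlg.{u} E) i)

/-- `[1,0]` in `T × T`. -/
noncomputable def fbar : Fin Z.n → (TAlg.{u} E × TAlg.{u} E) :=
  fun i => (Z.oneA (TAlg.{u} E) i, Z.zeroA (TAlg.{u} E) i)

theorem tDiamond : CentDiamond E Z (TAlg.{u} E × TAlg.{u} E) (ebar E Z) (fbar E Z) := by
  constructor
  exact
    { A₁ := TAlg.{u} E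
      A₂ := TAlg.{u} E
      mem₁ := tAlg_inVariety E
      mem₂ := tAlg_inVariety E
      iso := FirstOrder.Language.Equiv.refl L (TAlg.{u} E × TAlg.{u} E)
      he := fun i => rfl
      hf := fun i => rfl }

/-- The type of instructions: a function symbol together with a tuple of arguments in `T × T`. -/
abbrev Instr : Type u := (m : ℕ) × (L.Functions m × (Fin m → (TAlg.{u} E × TAlg.{u} E)))

/-- The semantic forcing property of a finite set of instructions. -/
def Sem (s : Finset (Instr.{u} E)) : Prop :=
  ∀ (A B : Type u) (iA : L.Structure A) (iB : L.Structure B),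
    InVariety E A → InVariety E B →
    ∀ v : (TAlg.{u} E × TAlg.{u} E) → A × B,
      (∀ j ∈ s, v (funMap j.2.1 j.2.2) = funMap j.2.1 (fun i => v (j.2.2 i))) →
      (∀ i, v (ebar E Z i) = (Z.zeroA A i, Z.oneA B i)) →
      ∀ i, v (fbar E Z i) = (Z.oneA A i, Z.zeroA B i)

theorem sem_exists (hsep : ZeroOneData.Separates.{u} Z E) (hbfc : HasBFC.{u} E)
    (hstable : StableByComplements.{u} E Z) : ∃ s, Sem.{u} E Z s := by
  classical
  by_contra hno
  push_neg at hno
  have H : ∀ s : Finset (Instr.{u} E), ∃ (A B : Type u) (iA : L.Structure A)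
      (iB : L.Structure B),
      InVariety E A ∧ InVariety E B ∧
      ∃ v : (TAlg.{u} E × TAlg.{u} E) → A × B,
        (∀ j ∈ s, v (funMap j.2.1 j.2.2) = funMap j.2.1 (fun i => v (j.2.2 i))) ∧
        (∀ i, v (ebar E Z i) = (Z.zeroA A i, Z.oneA B i)) ∧
        ¬(∀ i, v (fbar E Z i) = (Z.oneA A i, Z.zeroA B i)) := by
    intro s
    have h1 := hno s
    unfold Sem at h1
    push_neg at h1
    obtain ⟨A, B, iA, iB, hA, hB, v, hv1, hv2, i, hv3⟩ := h1
    exact ⟨A, B, iA, iB, hA, hB, v, hv1, hv2, fun hforall => hv3 (hforall i)⟩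
  choose A B iA iB hA hB v hins hpin hbad using H
  -- an ultrafilter containing all the cones
  haveI : Nonempty (Finset (Instr.{u} E)) := ⟨∅⟩
  let U : Ultrafilter (Finset (Instr.{u} E)) := Ultrafilter.of Filter.atTop
  have hcone : ∀ j : Instr.{u} E, {s : Finset (Instr.{u} E) | j ∈ s} ∈ U := by
    intro j
    apply Ultrafilter.of_le Filter.atTop
    have h2 : Set.Ici ({j} : Finset (Instr.{u} E)) ∈
        (Filter.atTop : Filter (Finset (Instr.{u} E))) := Filter.Ici_mem_atTop _
    apply Filter.mem_of_superset h2
    intro s hs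
    exact Finset.singleton_subset_iff.mp hs
  -- the ultraproduct
  letI iAB : ∀ s, L.Structure (A s × B s) := fun s => @prodStructure L (A s) (B s) (iA s) (iB s)
  let P : Type u := ∀ s, (A s × B s)
  letI iP : L.Structure P := piStructure (fun s => (A s × B s))
  have hVP : InVariety E P := by
    apply InVariety.pi
    intro s
    exact @InVariety.prod L (A s) (B s) (iA s) (iB s) E (hA s) (hB s)
  let cU : AlgCon L P :=
    { r := fun x y => {s | x s = y s} ∈ U
      refl := fun x => Filter.univ_mem' (fun s => rfl)
      symm := fun {x y} h => by
        apply Filter.mem_of_superset h; intro s hs; exact hs.symm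
      trans := fun {x y z} h1 h2 => by
        apply Filter.mem_of_superset (Filter.inter_mem h1 h2)
        rintro s ⟨hs1, hs2⟩; exact hs1.trans hs2
      compat := fun {m} f x y h => by
        have h3 : (⋂ i, {s | x i s = y i s}) ∈ U := Filter.iInter_mem.mpr h
        apply Filter.mem_of_superset h3
        intro s hs
        simp only [Set.mem_iInter, Set.mem_setOf_eq] at hs
        show funMap f (fun i => x i s) = funMap f (fun i => y i s)
        congr 1
        funext i
        exact hs i }
  let Cstar : Type u := ConQuot cU
  letI iC : L.Structure Cstar := conQuotStructure cU
  have hVC : InVariety E Cstar := hVP.quot cU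
  -- the homomorphism induced by the counterexample assignments
  let hH : (TAlg.{u} E × TAlg.{u} E) →[L] Cstar :=
    { toFun := fun p => ConQuot.mk cU (fun s => v s p)
      map_fun' := by
        intro m f x
        show ConQuot.mk cU (fun s => v s (funMap f x)) =
          funMap f (fun i => ConQuot.mk cU (fun s => v s (x i)))
        rw [show (fun i => ConQuot.mk cU (fun s => v s (x i))) =
          (fun i => ConQuot.mk cU ((fun i (s : Finset (Instr.{u} E)) => v s (x i)) i)) from rfl]
        rw [conQuot_funMap_mk]
        rw [conQuot_mk_eq_iff]
        show {s | v s (funMap f x) = funMap f (fun i s => v s (x i)) s} ∈ U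
        apply Filter.mem_of_superset (hcone ⟨m, (f, x)⟩)
        intro s hs
        exact hins s ⟨m, (f, x)⟩ hs
      map_rel' := fun r _ => isEmptyElim r }
  -- the canonical homomorphism
  let cHom : ∀ s, (TAlg.{u} E × TAlg.{u} E) →[L] (A s × B s) := fun s =>
    prodMapHom (homT E (A s) (iA s) (hA s)) (homT E (B s) (iB s) (hB s))
  let gP : (TAlg.{u} E × TAlg.{u} E) →[L] P :=
    { toFun := fun p s => cHom s p
      map_fun' := by
        intro m f x
        funext s
        exact (cHom s).map_fun f x
      map_rel' := fun r _ => isEmptyElim r }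
  let gH : (TAlg.{u} E × TAlg.{u} E) →[L] Cstar := (conQuotMk cU).comp gP
  -- images of ebar agree, images of fbar are both complements of it
  have hge : ∀ i, gH (ebar E Z i) = hH (ebar E Z i) := by
    intro i
    show ConQuot.mk cU _ = ConQuot.mk cU _
    congr 1
    funext s
    rw [hpin s i]
    show (homT E (A s) (iA s) (hA s) (Z.zeroA (TAlg.{u} E) i),
      homT E (B s) (iB s) (hB s) (Z.oneA (TAlg.{u} E) i)) = _
    letI := iA s
    letI := iB s
    rw [hom_zeroA (homT E (A s) (iA s) (hA s)) Z i, hom_oneA (homT E (B s) (iB s) (hB s)) Z i]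
  have hd1 : CentDiamond E Z Cstar (fun i => hH (ebar E Z i)) (fun i => hH (fbar E Z i)) :=
    hstable (TAlg.{u} E × TAlg.{u} E) Cstar
      ((tAlg_inVariety E).prod (tAlg_inVariety E)) hVC hH (ebar E Z) (fbar E Z)
      (tDiamond E Z)
  have hd2 : CentDiamond E Z Cstar (fun i => gH (ebar E Z i)) (fun i => gH (fbar E Z i)) :=
    hstable (TAlg.{u} E × TAlg.{u} E) Cstar
      ((tAlg_inVariety E).prod (tAlg_inVariety E)) hVC gH (ebar E Z) (fbar E Z)
      (tDiamond E Z)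
  rw [show (fun i => gH (ebar E Z i)) = (fun i => hH (ebar E Z i)) from funext hge] at hd2
  have heq : (fun i => hH (fbar E Z i)) = (fun i => gH (fbar E Z i)) :=
    compl_unique hsep hVC (hbfc Cstar hVC) hd1 hd2
  -- derive the contradiction
  have hiU : ∀ i : Fin Z.n,
      {s : Finset (Instr.{u} E) | v s (fbar E Z i) = (Z.oneA (A s) i, Z.zeroA (B s) i)} ∈ U := by
    intro i
    have h4 : hH (fbar E Z i) = gH (fbar E Z i) := congrFun heq i
    have h5 : ConQuot.mk cU (fun s => v s (fbar E Z i)) =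
        ConQuot.mk cU (fun s => (Z.oneA (A s) i, Z.zeroA (B s) i)) := by
      rw [show ConQuot.mk cU (fun s => v s (fbar E Z i)) = hH (fbar E Z i) from rfl, h4]
      show ConQuot.mk cU _ = _
      congr 1
      funext s
      show (homT E (A s) (iA s) (hA s) (Z.oneA (TAlg.{u} E) i),
        homT E (B s) (iB s) (hB s) (Z.zeroA (TAlg.{u} E) i)) = _
      letI := iA s
      letI := iB s
      rw [hom_oneA (homT E (A s) (iA s) (hA s)) Z i, hom_zeroA (homT E (B s) (iB s) (hB s)) Z i]
    exact conQuot_mk_eq_iff.mp h5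
  have hinter : (⋂ i, {s : Finset (Instr.{u} E) |
      v s (fbar E Z i) = (Z.oneA (A s) i, Z.zeroA (B s) i)}) ∈ U :=
    Filter.iInter_mem.mpr hiU
  obtain ⟨s, hs⟩ := Filter.nonempty_of_mem hinter
  simp only [Set.mem_iInter, Set.mem_setOf_eq] at hs
  exact hbad s hs

end Compactness

end Paper

namespace Paper

open FirstOrder.Language FirstOrder.Language.Structure

variable {L : FirstOrder.Language.{0, 0}}

section Swap

variable [L.IsAlgebraic] {E : Set (Identity L)} {Z : ZeroOneData L}

theorem lam_one_zero (φ : L.Formula ((Fin Z.n) ⊕ (Fin 2)))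
    (hw : RightFormulaWorks.{u} E Z φ) {A B : Type u} [iA : L.Structure A]
    [iB : L.Structure B] (hA : InVariety E A) (hB : InVariety E B)
    (a b : A) (c d : B) :
    φ.Realize (M := A × B)
      (Sum.elim (fun i => (Z.oneA A i, Z.zeroA B i)) ![(a, c), (b, d)]) ↔ a = b := by
  have hv : (Sum.elim (fun i => (Z.oneA A i, Z.zeroA B i)) ![(a, c), (b, d)]) =
      (swapEquiv (L := L) B A) ∘ (Sum.elim (fun i => (Z.zeroA B i, Z.oneA A i)) ![(c, a), (d, b)]) := by
    funext x
    rcases x with i | p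
    · rfl
    · refine Fin.cases ?_ ?_ p
      · rfl
      · intro q
        refine Fin.cases ?_ (fun q' => q'.elim0) q
        rfl
  rw [hv]
  rw [StrongHomClass.realize_formula (swapEquiv (L := L) B A) φ]
  exact hw B A hB hA c d a b

end Swap

section ListConj

variable {α : Type*} {k : ℕ}

def listConj (l : List (L.BoundedFormula α k)) : L.BoundedFormula α k :=
  l.foldr (· ⊓ ·) ⊤

theorem listConj_isQF {l : List (L.BoundedFormula α k)} (h : ∀ φ ∈ l, φ.IsQF) :
    (listConj l).IsQF := by
  induction l with
  | nil => exact BoundedFormula.IsQF.top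
  | cons a t ih =>
    exact (h a (List.mem_cons_self)).inf (ih (fun φ hφ => h φ (List.mem_cons_of_mem a hφ)))

theorem realize_listConj {M : Type u} [L.Structure M] {l : List (L.BoundedFormula α k)}
    {v : α → M} {xs : Fin k → M} :
    (listConj l).Realize v xs ↔ ∀ φ ∈ l, φ.Realize v xs := by
  induction l with
  | nil => simp [listConj]
  | cons a t ih =>
    show (a ⊓ listConj t).Realize v xs ↔ _
    rw [BoundedFormula.realize_inf, ih]
    constructor
    · rintro ⟨h1, h2⟩ φ hφ
      rcases List.mem_cons.mp hφ with h | h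
      · exact h ▸ h1
      · exact h2 φ h
    · intro h
      exact ⟨h a (List.mem_cons_self), fun φ hφ => h φ (List.mem_cons_of_mem a hφ)⟩

end ListConj

end Paper

namespace Paper

open FirstOrder.Language FirstOrder.Language.Structure

variable {L : FirstOrder.Language.{0, 0}}

section Rho

variable [L.IsAlgebraic] (E : Set (Identity L)) (Z : ZeroOneData L)

theorem rho_exists (hsep : ZeroOneData.Separates.{u} Z E)
    {s₀ : Finset (Instr.{u} E)} (hsem : Sem.{u} E Z s₀)
    {m : ℕ} (ψ : L.BoundedFormula ((Fin Z.n) ⊕ (Fin 2)) m) (hqf : ψ.IsQF)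
    (hworks : RightFormulaWorks.{u} E Z ψ.exs) :
    ∃ rho : L.Formula ((Fin Z.n) ⊕ (Fin 2)),
      IsExistentialForm rho ∧ LeftFormulaWorks.{u} E Z rho := by
  classical
  let TT := TAlg.{u} E × TAlg.{u} E
  let touched : Finset TT :=
    (s₀.biUnion (fun j => insert (funMap j.2.1 j.2.2) (Finset.image j.2.2 Finset.univ))) ∪
      Finset.image (ebar E Z) Finset.univ ∪ Finset.image (fbar E Z) Finset.univ
  have hmem_res : ∀ j ∈ s₀, funMap j.2.1 j.2.2 ∈ touched := by
    intro j hj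
    apply Finset.mem_union_left
    apply Finset.mem_union_left
    exact Finset.mem_biUnion.mpr ⟨j, hj, Finset.mem_insert_self _ _⟩
  have hmem_arg : ∀ j ∈ s₀, ∀ i, j.2.2 i ∈ touched := by
    intro j hj i
    apply Finset.mem_union_left
    apply Finset.mem_union_left
    exact Finset.mem_biUnion.mpr ⟨j, hj, Finset.mem_insert_of_mem
      (Finset.mem_image.mpr ⟨i, Finset.mem_univ i, rfl⟩)⟩
  have hmem_e : ∀ i, ebar E Z i ∈ touched := by
    intro i
    apply Finset.mem_union_left
    apply Finset.mem_union_right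
    exact Finset.mem_image.mpr ⟨i, Finset.mem_univ i, rfl⟩
  have hmem_f : ∀ i, fbar E Z i ∈ touched := by
    intro i
    apply Finset.mem_union_right
    exact Finset.mem_image.mpr ⟨i, Finset.mem_univ i, rfl⟩
  let K := touched.card
  let eqv : {x // x ∈ touched} ≃ Fin K := touched.equivFin
  let slotK : ∀ (p : TT), p ∈ touched → Fin K := fun p hp => eqv ⟨p, hp⟩
  let slot : ∀ (p : TT), p ∈ touched → Fin (K + m) := fun p hp => Fin.castAdd m (slotK p hp)
  -- the syntactic pieces
  let instrF : {j // j ∈ s₀} → L.BoundedFormula ((Fin Z.n) ⊕ (Fin 2)) (K + m) := fun j =>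
    Term.bdEqual
      (Term.func j.1.2.1 (fun i => Term.var (Sum.inr (slot (j.1.2.2 i) (hmem_arg j.1 j.2 i)))))
      (Term.var (Sum.inr (slot (funMap j.1.2.1 j.1.2.2) (hmem_res j.1 j.2))))
  let pinF : Fin Z.n → L.BoundedFormula ((Fin Z.n) ⊕ (Fin 2)) (K + m) := fun i =>
    Term.bdEqual (Term.var (Sum.inl (Sum.inl i)))
      (Term.var (Sum.inr (slot (ebar E Z i) (hmem_e i))))
  let lform : List (L.BoundedFormula ((Fin Z.n) ⊕ (Fin 2)) (K + m)) :=
    (s₀.attach.toList.map instrF) ++ List.ofFn pinF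
  let g : ((Fin Z.n) ⊕ (Fin 2)) → (((Fin Z.n) ⊕ (Fin 2)) ⊕ Fin K) :=
    Sum.elim (fun j => Sum.inr (slotK (fbar E Z j) (hmem_f j)))
      (fun p => Sum.inl (Sum.inr p))
  let Φ : L.BoundedFormula ((Fin Z.n) ⊕ (Fin 2)) (K + m) := (listConj lform) ⊓ (ψ.relabel g)
  refine ⟨Φ.exs, ⟨K + m, Φ, ?_, rfl⟩, ?_⟩
  · -- Φ is quantifier-free
    apply BoundedFormula.IsQF.inf
    · apply listConj_isQF
      intro φ hφ
      rcases List.mem_append.mp hφ with h | h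
      · obtain ⟨j, _, rfl⟩ := List.mem_map.mp h
        exact (BoundedFormula.IsAtomic.equal _ _).isQF
      · obtain ⟨i, rfl⟩ := List.mem_ofFn.mp h
        exact (BoundedFormula.IsAtomic.equal _ _).isQF
    · exact hqf.relabel g
  · -- ρ works on the left
    intro A B iA iB hA hB a b c d
    set V : ((Fin Z.n) ⊕ (Fin 2)) → A × B :=
      Sum.elim (fun i => (Z.zeroA A i, Z.oneA B i)) ![(a, c), (b, d)] with hV
    constructor
    · -- forward direction: any realization forces a = b
      intro hreal
      obtain ⟨xs, hxs⟩ := BoundedFormula.realize_exs.mp hreal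
      rw [BoundedFormula.realize_inf] at hxs
      obtain ⟨h1, h2⟩ := hxs
      rw [realize_listConj] at h1
      let vv : TT → A × B := fun p =>
        if hp : p ∈ touched then xs (slot p hp)
        else (Z.zeroA A ⟨0, Z.npos⟩, Z.zeroA B ⟨0, Z.npos⟩)
      have hvv : ∀ (p : TT) (hp : p ∈ touched), vv p = xs (slot p hp) :=
        fun p hp => dif_pos hp
      have hins : ∀ j ∈ s₀, vv (funMap j.2.1 j.2.2) = funMap j.2.1 (fun i => vv (j.2.2 i)) := by
        intro j hj
        have hmm : instrF ⟨j, hj⟩ ∈ lform := List.mem_append.mpr (Or.inl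
          (List.mem_map.mpr ⟨⟨j, hj⟩, Finset.mem_toList.mpr (Finset.mem_attach s₀ _), rfl⟩))
        have hh := h1 _ hmm
        rw [BoundedFormula.realize_bdEqual] at hh
        simp only [Term.realize] at hh
        rw [hvv _ (hmem_res j hj)]
        rw [show (fun i => vv (j.2.2 i)) = (fun i => xs (slot (j.2.2 i) (hmem_arg j hj i)))
          from funext (fun i => hvv _ _)]
        exact hh.symm
      have hpin : ∀ i, vv (ebar E Z i) = (Z.zeroA A i, Z.oneA B i) := by
        intro i
        have hmm : pinF i ∈ lform := List.mem_append.mpr (Or.inr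
          (List.mem_ofFn.mpr ⟨i, rfl⟩))
        have hh := h1 _ hmm
        rw [BoundedFormula.realize_bdEqual] at hh
        simp only [Term.realize] at hh
        rw [hvv _ (hmem_e i)]
        exact hh.symm
      have hf := hsem A B iA iB hA hB vv hins hpin
      rw [BoundedFormula.realize_relabel] at h2
      have hfree : (Sum.elim V (xs ∘ Fin.castAdd m) ∘ g) =
          Sum.elim (fun i => (Z.oneA A i, Z.zeroA B i)) ![(a, c), (b, d)] := by
        funext x
        rcases x with i | p
        · show xs (Fin.castAdd m (slotK (fbar E Z i) (hmem_f i))) = _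
          rw [← hvv _ (hmem_f i), hf i]
          rfl
        · rfl
      rw [hfree] at h2
      have hlam : (ψ.exs).Realize (M := A × B)
          (Sum.elim (fun i => (Z.oneA A i, Z.zeroA B i)) ![(a, c), (b, d)]) :=
        BoundedFormula.realize_exs.mpr ⟨xs ∘ Fin.natAdd K, h2⟩
      exact (lam_one_zero (ψ.exs) hworks hA hB a b c d).mp hlam
    · -- backward direction: a = b gives a realization via the canonical homomorphism
      intro hab
      let g₀ : TT →[L] (A × B) := prodMapHom (homT E A iA hA) (homT E B iB hB)
      have hg₀e : ∀ i, g₀ (ebar E Z i) = (Z.zeroA A i, Z.oneA B i) := by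
        intro i
        show (homT E A iA hA (Z.zeroA (TAlg.{u} E) i), homT E B iB hB (Z.oneA (TAlg.{u} E) i)) = _
        rw [hom_zeroA (homT E A iA hA) Z i, hom_oneA (homT E B iB hB) Z i]
      have hg₀f : ∀ i, g₀ (fbar E Z i) = (Z.oneA A i, Z.zeroA B i) := by
        intro i
        show (homT E A iA hA (Z.oneA (TAlg.{u} E) i), homT E B iB hB (Z.zeroA (TAlg.{u} E) i)) = _
        rw [hom_oneA (homT E A iA hA) Z i, hom_zeroA (homT E B iB hB) Z i]
      have hlam : (ψ.exs).Realize (M := A × B)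
          (Sum.elim (fun i => (Z.oneA A i, Z.zeroA B i)) ![(a, c), (b, d)]) :=
        (lam_one_zero (ψ.exs) hworks hA hB a b c d).mpr hab
      obtain ⟨ws, hws⟩ := BoundedFormula.realize_exs.mp hlam
      let xs : Fin (K + m) → A × B :=
        Fin.addCases (fun k => g₀ ((eqv.symm k) : {x // x ∈ touched}).1) ws
      have hxs_slot : ∀ (p : TT) (hp : p ∈ touched), xs (slot p hp) = g₀ p := by
        intro p hp
        show Fin.addCases (fun k => g₀ ((eqv.symm k) : {x // x ∈ touched}).1) ws
          (Fin.castAdd m (slotK p hp)) = g₀ p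
        rw [Fin.addCases_left]
        rw [show eqv.symm (eqv ⟨p, hp⟩) = ⟨p, hp⟩ from Equiv.symm_apply_apply _ _]
      apply BoundedFormula.realize_exs.mpr ⟨xs, ?_⟩
      rw [BoundedFormula.realize_inf]
      constructor
      · rw [realize_listConj]
        intro φ hφ
        rcases List.mem_append.mp hφ with h | h
        · obtain ⟨j, _, rfl⟩ := List.mem_map.mp h
          rw [BoundedFormula.realize_bdEqual]
          show funMap j.1.2.1
              (fun i => Term.realize (Sum.elim V xs)
                (Term.var (Sum.inr (slot (j.1.2.2 i) (hmem_arg j.1 j.2 i))))) =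
            Sum.elim V xs (Sum.inr (slot (funMap j.1.2.1 j.1.2.2) (hmem_res j.1 j.2)))
          show funMap j.1.2.1 (fun i => xs (slot (j.1.2.2 i) (hmem_arg j.1 j.2 i))) =
            xs (slot (funMap j.1.2.1 j.1.2.2) (hmem_res j.1 j.2))
          have e1 : (fun i => xs (slot (j.1.2.2 i) (hmem_arg j.1 j.2 i))) =
              (fun i => g₀ (j.1.2.2 i)) := funext (fun i => hxs_slot _ _)
          rw [e1, hxs_slot _ (hmem_res j.1 j.2)]
          exact (g₀.map_fun j.1.2.1 j.1.2.2).symm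
        · obtain ⟨i, rfl⟩ := List.mem_ofFn.mp h
          rw [BoundedFormula.realize_bdEqual]
          show Sum.elim V xs (Sum.inl (Sum.inl i)) =
            Sum.elim V xs (Sum.inr (slot (ebar E Z i) (hmem_e i)))
          show V (Sum.inl i) = xs (slot (ebar E Z i) (hmem_e i))
          rw [hxs_slot _ (hmem_e i), hg₀e i]
          rfl
      · rw [BoundedFormula.realize_relabel]
        have hfree : (Sum.elim V (xs ∘ Fin.castAdd m) ∘ g) =
            Sum.elim (fun i => (Z.oneA A i, Z.zeroA B i)) ![(a, c), (b, d)] := by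
          funext x
          rcases x with i | p
          · show xs (Fin.castAdd m (slotK (fbar E Z i) (hmem_f i))) = _
            rw [show xs (Fin.castAdd m (slotK (fbar E Z i) (hmem_f i))) =
              xs (slot (fbar E Z i) (hmem_f i)) from rfl]
            rw [hxs_slot _ (hmem_f i), hg₀f i]
            rfl
          · rfl
        rw [hfree]
        have hnat : xs ∘ Fin.natAdd K = ws := by
          funext r
          show Fin.addCases (fun k => g₀ ((eqv.symm k) : {x // x ∈ touched}).1) ws
            (Fin.natAdd K r) = ws r
          exact Fin.addCases_right r
        rw [hnat]
        exact hws

end Rho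

end Paper

/-- Every variety with RexDFC that is stable by complements has
TexDFC: there are existential formulas λ and ρ defining factor congruences on
the right and on the left. -/
theorem statement3 (L : FirstOrder.Language.{0, 0}) [L.IsAlgebraic]
    [Finite (Σ n, L.Functions n)]
    (E : Set (Identity L)) (Z : ZeroOneData L)
    (hsep : ZeroOneData.Separates.{u} Z E) (hrex : HasRexDFC.{u} E Z)
    (hstable : StableByComplements.{u} E Z) :
    ∃ lam rho : L.Formula ((Fin Z.n) ⊕ (Fin 2)),
      IsExistentialForm lam ∧ IsExistentialForm rho ∧
      RightFormulaWorks.{u} E Z lam ∧ LeftFormulaWorks.{u} E Z rho := by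
  obtain ⟨hbfc, φ, hex, hworks⟩ := hrex
  obtain ⟨m, ψ, hqf, hφeq⟩ := hex
  subst hφeq
  obtain ⟨s₀, hsem⟩ := sem_exists.{u} E Z hsep hbfc hstable
  obtain ⟨rho, hex', hworks'⟩ := rho_exists.{u} E Z hsep hsem ψ hqf hworks
  exact ⟨ψ.exs, rho, ⟨m, ψ, hqf, rfl⟩, hex', hworks, hworks'⟩
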